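/- For every n ∈ ℕ₊, the independence number of the Birkhoff graph satisfies α(B_n) ≥ ∏_{i=1}^{⌊log₂ n⌋} ⌊n/2^i⌋!. -/

import Mathlib

open Equiv Finset

/-- `A` is an independent set of the Birkhoff graph `B_m`: no two of its elements differ
by a single cycle. -/
def IsIndep {m : ℕ} (A : Finset (Equiv.Perm (Fin m))) : Prop :=
  ∀ σ ∈ A, ∀ τ ∈ A, ¬ (σ * τ⁻¹).IsCycle


lemma sumCongr_zpow {α β : Type*} (a : Perm α) (b : Perm β) (n : ℤ) :
    (Equiv.sumCongr a b)^n = Equiv.sumCongr (a^n) (b^n) :=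
  (map_zpow (Equiv.Perm.sumCongrHom α β) (a, b) n).symm

lemma sumCongr_isCycle {α β : Type*} {a : Perm α} {b : Perm β}
    (h : Equiv.Perm.IsCycle (Equiv.sumCongr a b)) :
    (Equiv.Perm.IsCycle a ∧ b = 1) ∨ (a = 1 ∧ Equiv.Perm.IsCycle b) := by
  obtain ⟨x, hx, hs⟩ := h
  cases x with
  | inl xa =>
    have hb : b = 1 := by
      ext y
      by_contra hy
      obtain ⟨n, hn⟩ := hs (y := Sum.inr y) (by simpa using hy)
      rw [sumCongr_zpow] at hn
      simp at hn
    left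
    refine ⟨⟨xa, by simpa using hx, fun y hy => ?_⟩, hb⟩
    obtain ⟨n, hn⟩ := hs (y := Sum.inl y) (by simpa using hy)
    rw [sumCongr_zpow] at hn
    simp at hn
    exact ⟨n, hn⟩
  | inr xb =>
    have ha : a = 1 := by
      ext y
      by_contra hy
      obtain ⟨n, hn⟩ := hs (y := Sum.inl y) (by simpa using hy)
      rw [sumCongr_zpow] at hn
      simp at hn
    right
    refine ⟨ha, ⟨xb, by simpa using hx, fun y hy => ?_⟩⟩
    obtain ⟨n, hn⟩ := hs (y := Sum.inr y) (by simpa using hy)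
    rw [sumCongr_zpow] at hn
    simp at hn
    exact ⟨n, hn⟩

variable {m k : ℕ} (hkm : k ≤ m)

/-- embedding of `Fin k` as the subtype of small elements of `Fin m`. -/
def subEquiv (hkm : k ≤ m) : Fin k ≃ {i : Fin m // (i : ℕ) < k} where
  toFun j := ⟨Fin.castLE hkm j, j.2⟩
  invFun i := ⟨(i : Fin m), i.2⟩
  left_inv j := by ext; simp
  right_inv i := by ext; simp

/-- extension of a permutation of `Fin k` to `Fin m` by the identity. -/
def extPerm (hkm : k ≤ m) (τ : Perm (Fin k)) : Perm (Fin m) :=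
  τ.extendDomain (subEquiv hkm)

lemma extPerm_mul (τ₁ τ₂ : Perm (Fin k)) :
    extPerm hkm (τ₁ * τ₂) = extPerm hkm τ₁ * extPerm hkm τ₂ :=
  (Equiv.Perm.extendDomain_mul _ _ _).symm

lemma extPerm_one : extPerm hkm (1 : Perm (Fin k)) = 1 :=
  Equiv.Perm.extendDomain_one _

lemma extPerm_apply_lt (τ : Perm (Fin k)) (i : Fin m) (h : (i : ℕ) < k) :
    extPerm hkm τ i = Fin.castLE hkm (τ ⟨i, h⟩) := by
  rw [extPerm, Equiv.Perm.extendDomain_apply_subtype τ (subEquiv hkm) (b := i) h]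
  simp only [subEquiv, Equiv.coe_fn_mk, Equiv.coe_fn_symm_mk]

lemma extPerm_apply_ge (τ : Perm (Fin k)) (i : Fin m) (h : ¬ (i : ℕ) < k) :
    extPerm hkm τ i = i :=
  Equiv.Perm.extendDomain_apply_not_subtype _ _ h

lemma extPerm_isCycle (τ : Perm (Fin k)) (h : τ.IsCycle) : (extPerm hkm τ).IsCycle :=
  h.extendDomain _

/-- the twist involution -/
def wFun (hkm : k ≤ m) : Fin m ⊕ Fin k → Fin m ⊕ Fin k
  | Sum.inl i => if h : (i : ℕ) < k then Sum.inr ⟨i, h⟩ else Sum.inl i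
  | Sum.inr j => Sum.inl (Fin.castLE hkm j)

lemma wFun_involutive : Function.Involutive (wFun hkm) := by
  rintro (i | j)
  · by_cases h : (i : ℕ) < k
    · simp [wFun, h]
    · simp [wFun, h]
  · simp [wFun]

def wPerm (hkm : k ≤ m) : Perm (Fin m ⊕ Fin k) := (wFun_involutive hkm).toPerm

def DPerm (hkm : k ≤ m) (τ : Perm (Fin k)) : Perm (Fin m ⊕ Fin k) :=
  Equiv.sumCongr (extPerm hkm τ) τ

lemma wPerm_comm (τ : Perm (Fin k)) : wPerm hkm * DPerm hkm τ = DPerm hkm τ * wPerm hkm := by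
  ext x
  simp only [Equiv.Perm.mul_apply]
  cases x with
  | inl i =>
    by_cases h : (i : ℕ) < k
    · have h1 : DPerm hkm τ (Sum.inl i) = Sum.inl (Fin.castLE hkm (τ ⟨i, h⟩)) := by
        simp [DPerm, extPerm_apply_lt hkm τ i h]
      have h2 : wPerm hkm (Sum.inl i) = Sum.inr ⟨(i : ℕ), h⟩ := by
        simp [wPerm, wFun, h]
      rw [h1, h2]
      have h3 : ((Fin.castLE hkm (τ ⟨(i : ℕ), h⟩) : Fin m) : ℕ) < k := by simp
      have h4 : wPerm hkm (Sum.inl (Fin.castLE hkm (τ ⟨(i : ℕ), h⟩))) =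
          Sum.inr ⟨((Fin.castLE hkm (τ ⟨(i : ℕ), h⟩) : Fin m) : ℕ), h3⟩ := by
        simp [wPerm, wFun, h3]
      rw [h4]
      simp [DPerm]
    · have h1 : DPerm hkm τ (Sum.inl i) = Sum.inl i := by
        simp [DPerm, extPerm_apply_ge hkm τ i h]
      have h2 : wPerm hkm (Sum.inl i) = Sum.inl i := by
        simp [wPerm, wFun, h]
      rw [h1, h2, h1]
  | inr j =>
    have h1 : DPerm hkm τ (Sum.inr j) = Sum.inr (τ j) := by simp [DPerm]
    have h2 : ∀ a : Fin k, wPerm hkm (Sum.inr a) = Sum.inl (Fin.castLE hkm a) := by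
      intro a; simp [wPerm, wFun]
    rw [h1, h2, h2]
    have h3 : ((Fin.castLE hkm j : Fin m) : ℕ) < k := by simp
    have h4 : DPerm hkm τ (Sum.inl (Fin.castLE hkm j)) =
        Sum.inl (Fin.castLE hkm (τ ⟨((Fin.castLE hkm j : Fin m) : ℕ), h3⟩)) := by
      simp [DPerm, extPerm_apply_lt hkm τ _ h3]
    rw [h4]
    congr 1

/-- transfer of permutations along an equivalence, as a group isomorphism -/
def permMulEquiv {α β : Type*} (e : α ≃ β) : Perm α ≃* Perm β where
  toEquiv := e.permCongr
  map_mul' f g := by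
    ext x
    simp [Equiv.permCongr_apply]

lemma permMulEquiv_isCycle {α β : Type*} (e : α ≃ β) (f : Perm α) (h : f.IsCycle) :
    (permMulEquiv e f).IsCycle := by
  obtain ⟨x, hx, hs⟩ := h
  refine ⟨e x, by simp [permMulEquiv, Equiv.permCongr_apply, hx, e.injective.ne_iff], ?_⟩
  intro y hy
  have hy' : f (e.symm y) ≠ e.symm y := by
    intro hc
    apply hy
    simp only [permMulEquiv, MulEquiv.coe_mk, Equiv.permCongr_apply] at *
    rw [hc]; simp
  obtain ⟨n, hn⟩ := hs (y := e.symm y) hy'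
  refine ⟨n, ?_⟩
  have : (permMulEquiv e f) ^ n = permMulEquiv e (f ^ n) := (map_zpow (permMulEquiv e) f n).symm
  rw [this]
  simp only [permMulEquiv, MulEquiv.coe_mk, Equiv.permCongr_apply, Equiv.symm_apply_apply]
  rw [hn]; simp

lemma isCycle_of_permMulEquiv {α β : Type*} (e : α ≃ β) (f : Perm α)
    (h : (permMulEquiv e f).IsCycle) : f.IsCycle := by
  have := permMulEquiv_isCycle e.symm _ h
  convert this using 1
  ext x
  simp [permMulEquiv, Equiv.permCongr_apply]

def EPerm (hkm : k ≤ m) (σ : Perm (Fin m)) : Perm (Fin m ⊕ Fin k) :=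
  Equiv.sumCongr σ 1

def FPerm (hkm : k ≤ m) (σ : Perm (Fin m)) (τ : Perm (Fin k)) : Perm (Fin m ⊕ Fin k) :=
  EPerm hkm σ * (wPerm hkm * DPerm hkm τ)

lemma DPerm_mul (τ₁ τ₂ : Perm (Fin k)) :
    DPerm hkm (τ₁ * τ₂) = DPerm hkm τ₁ * DPerm hkm τ₂ := by
  simp [DPerm, extPerm_mul, Equiv.Perm.sumCongr_mul]

lemma wPerm_mul_self : wPerm hkm * wPerm hkm = 1 := by
  ext x
  simp [wPerm, Equiv.Perm.mul_apply, wFun_involutive hkm x]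

lemma key (σ₁ σ₂ : Perm (Fin m)) (τ₁ τ₂ : Perm (Fin k)) :
    FPerm hkm σ₁ τ₁ * (FPerm hkm σ₂ τ₂)⁻¹ =
      Equiv.sumCongr (σ₁ * extPerm hkm (τ₁ * τ₂⁻¹) * σ₂⁻¹) (τ₁ * τ₂⁻¹) := by
  have hD : (DPerm hkm τ₂)⁻¹ = DPerm hkm τ₂⁻¹ := by
    rw [inv_eq_iff_mul_eq_one, ← DPerm_mul]
    simp only [mul_inv_cancel]
    rw [DPerm, extPerm_one]
    ext x
    cases x <;> simp
  have : FPerm hkm σ₁ τ₁ * (FPerm hkm σ₂ τ₂)⁻¹ =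
      EPerm hkm σ₁ * (wPerm hkm * DPerm hkm (τ₁ * τ₂⁻¹) * wPerm hkm) * (EPerm hkm σ₂)⁻¹ := by
    rw [FPerm, FPerm]
    have hw : (wPerm hkm)⁻¹ = wPerm hkm := by
      rw [inv_eq_iff_mul_eq_one, wPerm_mul_self]
    rw [mul_inv_rev, mul_inv_rev, hD, hw, DPerm_mul]
    group
  rw [this, wPerm_comm, mul_assoc (DPerm hkm (τ₁ * τ₂⁻¹)), wPerm_mul_self, mul_one]
  have hE : (EPerm hkm σ₂)⁻¹ = EPerm hkm σ₂⁻¹ := by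
    rw [inv_eq_iff_mul_eq_one, EPerm, EPerm, Equiv.Perm.sumCongr_mul]
    simp only [mul_inv_cancel, mul_one]
    ext x
    cases x <;> simp
  rw [hE, EPerm, EPerm, DPerm, Equiv.Perm.sumCongr_mul, Equiv.Perm.sumCongr_mul]
  simp

lemma step {n : ℕ} (hkm : k ≤ m) (eqn : m + k = n) (A : Finset (Perm (Fin m)))
    (hA : IsIndep A) :
    ∃ B : Finset (Perm (Fin n)), IsIndep B ∧ B.card = A.card * k.factorial := by
  classical
  set e : (Fin m ⊕ Fin k) ≃ Fin n := finSumFinEquiv.trans (finCongr eqn) with he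
  set Ψ : Perm (Fin m ⊕ Fin k) ≃* Perm (Fin n) := permMulEquiv e with hΨ
  refine ⟨(A ×ˢ (univ : Finset (Perm (Fin k)))).image
    (fun p => Ψ (FPerm hkm p.1 p.2)), ?_, ?_⟩
  · intro x hx y hy hcyc
    simp only [mem_image, mem_product] at hx hy
    obtain ⟨⟨σ₁, τ₁⟩, ⟨hσ₁, -⟩, rfl⟩ := hx
    obtain ⟨⟨σ₂, τ₂⟩, ⟨hσ₂, -⟩, rfl⟩ := hy
    rw [← map_inv, ← map_mul] at hcyc
    have hc := isCycle_of_permMulEquiv e _ hcyc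
    rw [key] at hc
    rcases sumCongr_isCycle hc with ⟨ha, hb⟩ | ⟨ha, hb⟩
    · rw [hb, extPerm_one, mul_one] at ha
      exact hA σ₁ hσ₁ σ₂ hσ₂ ha
    · have hext : extPerm hkm (τ₁ * τ₂⁻¹) = σ₁⁻¹ * σ₂ := by
        have := ha
        rw [mul_assoc] at this
        have h2 := congrArg (fun z => σ₁⁻¹ * z * σ₂) this
        simpa [mul_assoc] using h2
      have hcycE : (extPerm hkm (τ₁ * τ₂⁻¹)).IsCycle := extPerm_isCycle hkm _ hb
      rw [hext] at hcycE
      have : (σ₁ * (σ₁⁻¹ * σ₂) * σ₁⁻¹).IsCycle := hcycE.conj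
      rw [← mul_assoc] at this
      simp only [mul_inv_cancel, one_mul] at this
      exact hA σ₂ hσ₂ σ₁ hσ₁ this
  · have hinj : Function.Injective (fun p : Perm (Fin m) × Perm (Fin k) =>
        Ψ (FPerm hkm p.1 p.2)) := by
      intro p q hpq
      have h1 : FPerm hkm p.1 p.2 = FPerm hkm q.1 q.2 := Ψ.injective hpq
      have h2 : FPerm hkm p.1 p.2 * (FPerm hkm q.1 q.2)⁻¹ = 1 := by
        rw [h1, mul_inv_cancel]
      rw [key] at h2
      have h3 := Equiv.Perm.sumCongrHom_injective (α := Fin m) (β := Fin k)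
        (a₁ := (p.1 * extPerm hkm (p.2 * q.2⁻¹) * q.1⁻¹, p.2 * q.2⁻¹)) (a₂ := (1, 1))
        (by simpa [Equiv.Perm.sumCongrHom_apply] using h2)
      have hτ : p.2 = q.2 := by
        have := congrArg Prod.snd h3
        simp only at this
        rwa [mul_inv_eq_one] at this
      have hσ : p.1 = q.1 := by
        have h4 := congrArg Prod.fst h3
        simp only at h4
        rw [hτ] at h4
        simp only [mul_inv_cancel, extPerm_one, mul_one] at h4
        rwa [mul_inv_eq_one] at h4
      exact Prod.ext hσ hτ
    rw [card_image_of_injective _ hinj, card_product, card_univ, Fintype.card_perm,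
      Fintype.card_fin]

lemma numeric {n : ℕ} (hn : 2 ≤ n) :
    ∏ i ∈ Finset.Icc 1 (Nat.log 2 n), (n / 2 ^ i).factorial ≤
      (n / 2).factorial * ∏ i ∈ Finset.Icc 1 (Nat.log 2 ((n + 1) / 2)), ((n + 1) / 2 / 2 ^ i).factorial := by
  set L := Nat.log 2 n with hL
  set m := (n + 1) / 2 with hm
  have hL1 : 1 ≤ L := Nat.log_pos (by norm_num) hn
  have hsplit : Finset.Icc 1 L = Finset.cons 1 (Finset.Ioc 1 L) (by simp) :=
    Finset.Icc_eq_cons_Ioc hL1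
  rw [hsplit, Finset.prod_cons]
  have hIoc : Finset.Ioc 1 L = Finset.Icc 2 L := rfl
  have hmap : (Finset.Icc 1 (L - 1)).map (addRightEmbedding 1) = Finset.Icc 2 L := by
    rw [Finset.map_add_right_Icc]
    congr 1
    omega
  have hre : ∏ i ∈ Finset.Icc 2 L, (n / 2 ^ i).factorial =
      ∏ i ∈ Finset.Icc 1 (L - 1), (n / 2 ^ (i + 1)).factorial := by
    rw [← hmap, Finset.prod_map]
    rfl
  rw [hIoc, hre, pow_one]
  refine Nat.mul_le_mul_left _ ?_
  calc ∏ i ∈ Finset.Icc 1 (L - 1), (n / 2 ^ (i + 1)).factorial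
      ≤ ∏ i ∈ Finset.Icc 1 (L - 1), (m / 2 ^ i).factorial := by
        refine Finset.prod_le_prod' fun i _ => Nat.factorial_le ?_
        have h1 : n / 2 ^ (i + 1) = n / 2 / 2 ^ i := by
          rw [Nat.div_div_eq_div_mul, pow_succ, mul_comm]
        rw [h1]
        exact Nat.div_le_div_right (by omega)
    _ ≤ ∏ i ∈ Finset.Icc 1 (Nat.log 2 m), (m / 2 ^ i).factorial := by
        refine Finset.prod_le_prod_of_subset_of_one_le' ?_ fun i _ _ => Nat.one_le_iff_ne_zero.mpr
          (Nat.factorial_ne_zero _)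
        apply Finset.Icc_subset_Icc_right
        have hpow : 2 ^ (L - 1) ≤ m := by
          have h2 : 2 ^ L ≤ n := Nat.pow_log_le_self 2 (by omega)
          have h3 : 2 ^ (L - 1) * 2 = 2 ^ L := by
            rw [← pow_succ]
            congr 1
            omega
          omega
        have hm0 : m ≠ 0 := by omega
        have := (Nat.le_log_iff_pow_le (b := 2) (by norm_num) (y := m) hm0).mpr hpow
        omega

lemma exists_indep : ∀ n : ℕ, 1 ≤ n →
    ∃ A : Finset (Perm (Fin n)), IsIndep A ∧
      ∏ i ∈ Finset.Icc 1 (Nat.log 2 n), (n / 2 ^ i).factorial ≤ A.card := by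
  intro n
  induction n using Nat.strong_induction_on with
  | _ n ih =>
  intro hn
  rcases eq_or_lt_of_le hn with h1 | h2
  · refine ⟨{1}, ?_, ?_⟩
    · intro σ hσ τ hτ hc
      simp only [Finset.mem_singleton] at hσ hτ
      subst hσ; subst hτ
      simp only [inv_one, mul_one] at hc
      exact hc.ne_one rfl
    · have : Nat.log 2 n = 0 := by
        rw [← h1]
        simp
      rw [this]
      simp
  · -- n ≥ 2
    have hn2 : 2 ≤ n := h2
    set m := (n + 1) / 2 with hm
    set k := n / 2 with hk
    have hkm : k ≤ m := by omega
    have heq : m + k = n := by omega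
    have hmlt : m < n := by omega
    have hm1 : 1 ≤ m := by omega
    obtain ⟨A, hA, hcard⟩ := ih m hmlt hm1
    obtain ⟨B, hB, hBcard⟩ := step hkm heq A hA
    refine ⟨B, hB, ?_⟩
    rw [hBcard]
    calc ∏ i ∈ Finset.Icc 1 (Nat.log 2 n), (n / 2 ^ i).factorial
        ≤ k.factorial * ∏ i ∈ Finset.Icc 1 (Nat.log 2 m), (m / 2 ^ i).factorial := numeric hn2
      _ ≤ k.factorial * A.card := Nat.mul_le_mul_left _ hcard
      _ = A.card * k.factorial := Nat.mul_comm _ _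


/-- the independence number of the Birkhoff graph `B_n` is at least
`∏_{i=1}^{⌊log₂ n⌋} ⌊n/2^i⌋!`. -/
theorem stmt15 (n : ℕ) (hn : 1 ≤ n) :
    ∃ A : Finset (Equiv.Perm (Fin n)), IsIndep A ∧
      ∏ i ∈ Finset.Icc 1 (Nat.log 2 n), (n / 2 ^ i).factorial ≤ A.card :=
  exists_indep n hn
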